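/- (3,5) threshold scheme on the 5-cycle (Proposition 4): let C5 be the cycle graph on vertices {1,…,5}, and for S ∈ {0,1} let ℓ^S := (S,S,S,S,S). Then (a) for every subset V' ⊆ {1,…,5} with |V'| ≤ 2, the reduced states coincide: Tr_{V∖V'}(|G_{ℓ^0}⟩⟨G_{ℓ^0}|) = Tr_{V∖V'}(|G_{ℓ^1}⟩⟨G_{ℓ^1}|); and (b) for every subset V' with |V'| = 3 there exists a nonempty T ⊆ V' such that the product ∏_{i∈T} K_i (with K_i = X_i·∏_{k∈N_i}Z_k) acts trivially outside V' and satisfies (∏_{i∈T} K_i)|G_{ℓ^S}⟩ = (−1)^S |G_{ℓ^S}⟩; hence any three players can determine S while any two players obtain no information about S. -/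

import Mathlib

noncomputable section

open scoped ComplexConjugate

/-- The Hilbert space of qubits indexed by `V`, as functions from bit strings to `ℂ`. -/
abbrev QState (V : Type) : Type := (V → Fin 2) → ℂ

/-- The diagonal operator with diagonal entries `d`. -/
def diagOp {V : Type} (d : (V → Fin 2) → ℂ) : QState V →ₗ[ℂ] QState V where
  toFun f := fun x => d x * f x
  map_add' f g := by funext x; simp [mul_add]
  map_smul' c f := by funext x; simp [smul_eq_mul]; ring

/-- The Pauli `Z` operator on qubit `i`. -/
def Zop {V : Type} (i : V) : QState V →ₗ[ℂ] QState V :=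
  diagOp fun x => (-1 : ℂ) ^ (x i : ℕ)

/-- The Pauli `X` operator on qubit `i` (bit flip). -/
def Xop {V : Type} [DecidableEq V] (i : V) : QState V →ₗ[ℂ] QState V where
  toFun f := fun x => f (Function.update x i (x i + 1))
  map_add' f g := rfl
  map_smul' c f := rfl

/-- The phase gate `S` on qubit `i`, sending `|x⟩` to `(-i)^(x i) |x⟩`. -/
def Sop {V : Type} (i : V) : QState V →ₗ[ℂ] QState V :=
  diagOp fun x => (-Complex.I) ^ (x i : ℕ)

/-- The Pauli `Y` operator on qubit `i`, `Y = i·X·Z`. -/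
def Yop {V : Type} [DecidableEq V] (i : V) : QState V →ₗ[ℂ] QState V :=
  Complex.I • (Xop i ∘ₗ Zop i)

/-- `qVal G x` is the number of edges of `G` both of whose endpoints carry bit 1 in `x`. -/
def qVal {V : Type} (G : SimpleGraph V) (x : V → Fin 2) : ℕ :=
  Nat.card {e : Sym2 V // e ∈ G.edgeSet ∧ ∀ v ∈ e, x v = 1}

/-- The graph state `|G⟩`, with amplitudes `2^{-n/2} (-1)^{q_G(x)}`. -/
def graphState {V : Type} [Fintype V] (G : SimpleGraph V) : QState V :=
  fun x => (((Real.sqrt 2)⁻¹ ^ Fintype.card V : ℝ) : ℂ) * (-1 : ℂ) ^ qVal G x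

/-- The labeled/encoded graph state `|𝒢_ℓ⟩ = (∏_i Z_i^{ℓ_i}) (∏_{j ∈ Vsq} S_j) |G⟩`,
with square-vertex set `Vsq`. -/
def encSq {V : Type} [Fintype V] (G : SimpleGraph V) (Vsq : Set V) (ℓ : V → Fin 2) : QState V :=
  fun x => (-1 : ℂ) ^ Nat.card {i : V // ℓ i = 1 ∧ x i = 1}
    * (-Complex.I) ^ Nat.card {j : V // j ∈ Vsq ∧ x j = 1}
    * graphState G x

/-- The encoded graph state `|G_ℓ⟩` (no square vertices). -/
def encG {V : Type} [Fintype V] (G : SimpleGraph V) (ℓ : V → Fin 2) : QState V :=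
  encSq G ∅ ℓ

open Classical in
/-- The stabilizer operator of vertex `i`: `X_i ∏_{j ∈ N_i} Z_j` for circular vertices,
`Y_i ∏_{j ∈ N_i} Z_j` for square vertices (`i ∈ Vsq`). -/
def Kop {V : Type} [DecidableEq V] (G : SimpleGraph V) (Vsq : Set V) (i : V) :
    QState V →ₗ[ℂ] QState V :=
  (if i ∈ Vsq then Yop i else Xop i) ∘ₗ
    diagOp fun x => (-1 : ℂ) ^ Nat.card {j : V // G.Adj i j ∧ x j = 1}

/-- Merge a bit string on `P` with a bit string on the complement of `P`. -/
def mergeBits {V : Type} [DecidableEq V] (P : Finset V) (a : {i // i ∈ P} → Fin 2)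
    (c : {i // i ∉ P} → Fin 2) : V → Fin 2 :=
  fun i => if h : i ∈ P then a ⟨i, h⟩ else c ⟨i, h⟩

/-- The reduced density matrix of the pure state `ψ` on the qubits in `P`:
`(a, b) ↦ ∑_c ⟨a⊔c|ψ⟩⟨ψ|b⊔c⟩`. -/
def red {V : Type} [Fintype V] [DecidableEq V] (P : Finset V) (ψ : QState V) :
    ({i // i ∈ P} → Fin 2) → ({i // i ∈ P} → Fin 2) → ℂ :=
  fun a b => ∑ c : {i // i ∉ P} → Fin 2, ψ (mergeBits P a c) * conj (ψ (mergeBits P b c))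

/-- The computational basis vector `|y⟩`. -/
def basisVec {V : Type} [Fintype V] [DecidableEq V] (y : V → Fin 2) : QState V :=
  fun x => if x = y then 1 else 0

/-- The matrix entry `⟨x|A|y⟩` of an operator. -/
def opEntry {V : Type} [Fintype V] [DecidableEq V] (A : QState V →ₗ[ℂ] QState V)
    (x y : V → Fin 2) : ℂ := A (basisVec y) x

/-- `A` acts trivially outside `P`: it equals `M ⊗ Id` for some operator `M` on the
qubits in `P`. -/
def trivialOutside {V : Type} [Fintype V] [DecidableEq V] (P : Finset V)
    (A : QState V →ₗ[ℂ] QState V) : Prop :=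
  ∃ M : ({i // i ∈ P} → Fin 2) → ({i // i ∈ P} → Fin 2) → ℂ,
    ∀ a b c c', opEntry A (mergeBits P a c) (mergeBits P b c') = if c = c' then M a b else 0

/-- The product `∏_{i ∈ T} K_i` of (commuting) operators, taken in sorted order. -/
def prodOps {V : Type} [LinearOrder V] (T : Finset V)
    (K : V → QState V →ₗ[ℂ] QState V) : QState V →ₗ[ℂ] QState V :=
  (T.sort (· ≤ ·)).foldr (fun i acc => K i ∘ₗ acc) LinearMap.id


/-- The cycle graph on `Fin n` (consecutive vertices mod `n` are adjacent). -/
def cycG (n : ℕ) [NeZero n] : SimpleGraph (Fin n) where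
  Adj a b := a ≠ b ∧ (b = a + 1 ∨ a = b + 1)
  symm := by constructor; intro a b h; exact ⟨h.1.symm, h.2.symm⟩
  loopless := by constructor; intro a h; exact h.1 rfl

-- ### auxiliary machinery
instance cycAdjDec : DecidableRel (cycG 5).Adj := fun a b =>
  decidable_of_iff (a ≠ b ∧ (b = a + 1 ∨ a = b + 1)) Iff.rfl

lemma natcard_sub {α : Type} [Fintype α] (p : α → Prop) [DecidablePred p] :
    Nat.card {x // p x} = (Finset.univ.filter p).card := by
  rw [Nat.card_eq_fintype_card, Fintype.card_subtype]

def QFin (x : Fin 5 → Fin 2) : ℕ :=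
  (Finset.univ.filter fun i : Fin 5 => x i = 1 ∧ x (i + 1) = 1).card

set_option maxRecDepth 10000 in
lemma qVal_eq (x : Fin 5 → Fin 2) : qVal (cycG 5) x = QFin x := by
  rw [qVal, natcard_sub]
  revert x; decide

def EC (S : Fin 2) (x : Fin 5 → Fin 2) : ℕ :=
  (Finset.univ.filter fun i : Fin 5 => S = 1 ∧ x i = 1).card

def wZ (S : Fin 2) (x : Fin 5 → Fin 2) : ℤ := (-1) ^ (EC S x + QFin x)

lemma encG_eq (S : Fin 2) (x : Fin 5 → Fin 2) :
    encG (cycG 5) (fun _ => S) x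
      = (((Real.sqrt 2)⁻¹ ^ 5 : ℝ) : ℂ) * ((wZ S x : ℤ) : ℂ) := by
  have h0 : Nat.card {j : Fin 5 // j ∈ (∅ : Set (Fin 5)) ∧ x j = 1} = 0 :=
    @Nat.card_of_isEmpty _ ⟨fun j => j.prop.1⟩
  simp only [encG, encSq, graphState, h0, pow_zero, one_mul, Fintype.card_fin, qVal_eq]
  rw [natcard_sub]
  have hEC : (Finset.univ.filter fun i : Fin 5 => (fun _ : Fin 5 => S) i = 1 ∧ x i = 1).card
      = EC S x := rfl
  rw [hEC, wZ]
  push_cast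
  ring

lemma red_eq (S : Fin 2) (P : Finset (Fin 5)) (a b : {i // i ∈ P} → Fin 2) :
    red P (encG (cycG 5) fun _ => S) a b
      = ((((Real.sqrt 2)⁻¹ ^ 5 : ℝ) : ℂ) * (((Real.sqrt 2)⁻¹ ^ 5 : ℝ) : ℂ))
        * (((∑ c : {i // i ∉ P} → Fin 2,
            wZ S (mergeBits P a c) * wZ S (mergeBits P b c)) : ℤ) : ℂ) := by
  rw [red]
  push_cast
  rw [Finset.mul_sum]
  refine Finset.sum_congr rfl fun c _ => ?_
  rw [encG_eq, encG_eq, map_mul, Complex.conj_ofReal, map_intCast]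
  push_cast
  ring

set_option maxRecDepth 100000 in
lemma partA_dec : ∀ P : Finset (Fin 5), P.card ≤ 2 →
    ∀ (a b : {i // i ∈ P} → Fin 2),
      (∑ c : {i // i ∉ P} → Fin 2, wZ 0 (mergeBits P a c) * wZ 0 (mergeBits P b c))
        = ∑ c : {i // i ∉ P} → Fin 2, wZ 1 (mergeBits P a c) * wZ 1 (mergeBits P b c) := by
  decide

def upd1 (x : Fin 5 → Fin 2) (i : Fin 5) : Fin 5 → Fin 2 :=
  Function.update x i (x i + 1)

def nbr (i : Fin 5) (x : Fin 5 → Fin 2) : ℕ :=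
  (Finset.univ.filter fun j : Fin 5 => (cycG 5).Adj i j ∧ x j = 1).card

def sgnL : List (Fin 5) → (Fin 5 → Fin 2) → ℤ
  | [], _ => 1
  | i :: t, x => (-1) ^ nbr i (upd1 x i) * sgnL t (upd1 x i)

def flipL : List (Fin 5) → (Fin 5 → Fin 2) → (Fin 5 → Fin 2)
  | [], x => x
  | i :: t, x => flipL t (upd1 x i)

lemma fold_apply (l : List (Fin 5)) (f : QState (Fin 5)) (x : Fin 5 → Fin 2) :
    (l.foldr (fun i acc => Kop (cycG 5) ∅ i ∘ₗ acc) LinearMap.id) f x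
      = ((sgnL l x : ℤ) : ℂ) * f (flipL l x) := by
  induction l generalizing x with
  | nil => simp [sgnL, flipL]
  | cons i t ih =>
    have hK : Kop (cycG 5) ∅ i
        = Xop i ∘ₗ diagOp (fun y => (-1 : ℂ) ^ Nat.card {j : Fin 5 // (cycG 5).Adj i j ∧ y j = 1}) := by
      rw [Kop, if_neg (Set.notMem_empty i)]
    calc (List.foldr (fun i acc => Kop (cycG 5) ∅ i ∘ₗ acc) LinearMap.id (i :: t)) f x
        = (Kop (cycG 5) ∅ i) ((List.foldr (fun i acc => Kop (cycG 5) ∅ i ∘ₗ acc) LinearMap.id t) f) x := rfl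
      _ = (-1 : ℂ) ^ Nat.card {j : Fin 5 // (cycG 5).Adj i j ∧ upd1 x i j = 1}
            * ((List.foldr (fun i acc => Kop (cycG 5) ∅ i ∘ₗ acc) LinearMap.id t) f) (upd1 x i) := by
          rw [hK]; rfl
      _ = (-1 : ℂ) ^ nbr i (upd1 x i) * (((sgnL t (upd1 x i) : ℤ) : ℂ) * f (flipL t (upd1 x i))) := by
          rw [natcard_sub, ih]; rfl
      _ = ((sgnL (i :: t) x : ℤ) : ℂ) * f (flipL (i :: t) x) := by
          rw [sgnL, flipL]; push_cast; ring

lemma flipL_eq (l : List (Fin 5)) (h : l.Nodup) (x : Fin 5 → Fin 2) (j : Fin 5) :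
    flipL l x j = x j + (if j ∈ l then 1 else 0) := by
  induction l generalizing x with
  | nil => simp [flipL]
  | cons i t ih =>
    rw [flipL, ih (List.nodup_cons.mp h).2]
    by_cases hj : j = i
    · subst hj
      have hnt : j ∉ t := (List.nodup_cons.mp h).1
      simp [upd1, hnt]
    · have hu : upd1 x i j = x j := Function.update_of_ne hj _ x
      simp [hu, List.mem_cons, hj]

lemma helper_b (P T : Finset (Fin 5)) (l : List (Fin 5)) (hl : T.sort (· ≤ ·) = l) (hTP : T ⊆ P)
    (heig : ∀ (S : Fin 2) (x : Fin 5 → Fin 2),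
      sgnL l x * wZ S (flipL l x) = (-1) ^ (S : ℕ) * wZ S x)
    (hsgn : ∀ (a : {i // i ∈ P} → Fin 2) (c c' : {i // i ∉ P} → Fin 2),
      sgnL l (mergeBits P a c) = sgnL l (mergeBits P a c')) :
    trivialOutside P (prodOps T (Kop (cycG 5) ∅)) ∧
      ∀ S : Fin 2, prodOps T (Kop (cycG 5) ∅) (encG (cycG 5) fun _ => S)
        = ((-1 : ℂ) ^ (S : ℕ)) • encG (cycG 5) fun _ => S := by
  subst hl
  set L := T.sort (· ≤ ·) with hLdef
  have hA : ∀ (f : QState (Fin 5)) x, prodOps T (Kop (cycG 5) ∅) f x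
      = ((sgnL L x : ℤ) : ℂ) * f (flipL L x) := fun f x => fold_apply L f x
  have hnd : L.Nodup := Finset.sort_nodup T (· ≤ ·)
  have hflip : ∀ x j, flipL L x j = x j + (if j ∈ L then 1 else 0) :=
    fun x j => flipL_eq L hnd x j
  have hout : ∀ j, j ∉ P → j ∉ L := fun j hj hjl =>
    hj (hTP ((Finset.mem_sort _).mp hjl))
  have hmP : ∀ (a : {i // i ∈ P} → Fin 2) (c : {i // i ∉ P} → Fin 2) j (hj : j ∈ P),
      mergeBits P a c j = a ⟨j, hj⟩ := fun a c j hj => dif_pos hj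
  have hmN : ∀ (a : {i // i ∈ P} → Fin 2) (c : {i // i ∉ P} → Fin 2) j (hj : j ∉ P),
      mergeBits P a c j = c ⟨j, hj⟩ := fun a c j hj => dif_neg hj
  set c0 : {i // i ∉ P} → Fin 2 := fun _ => 0 with hc0
  have hiff : ∀ a b (c c' : {i // i ∉ P} → Fin 2),
      (flipL L (mergeBits P a c) = mergeBits P b c') ↔
        (flipL L (mergeBits P a c0) = mergeBits P b c0 ∧ c = c') := by
    intro a b c c'
    constructor
    · intro h
      constructor
      · funext j
        have h1 := congrFun h j
        rw [hflip] at h1 ⊢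
        by_cases hj : j ∈ P
        · rw [hmP _ _ _ hj, hmP _ _ _ hj] at h1 ⊢
          exact h1
        · rw [hmN _ _ _ hj, hmN _ _ _ hj, if_neg (hout _ hj), add_zero]
      · funext jj
        have h1 := congrFun h jj.val
        rw [hflip, hmN a c _ jj.prop, hmN b c' _ jj.prop, if_neg (hout _ jj.prop),
          add_zero] at h1
        exact h1
    · rintro ⟨h1, rfl⟩
      funext j
      have h2 := congrFun h1 j
      rw [hflip] at h2 ⊢
      by_cases hj : j ∈ P
      · rw [hmP _ _ _ hj, hmP _ _ _ hj] at h2 ⊢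
        exact h2
      · rw [hmN _ _ _ hj, hmN _ _ _ hj, if_neg (hout _ hj), add_zero]
  constructor
  · refine ⟨fun a b => ((sgnL L (mergeBits P a c0) : ℤ) : ℂ)
      * (if flipL L (mergeBits P a c0) = mergeBits P b c0 then 1 else 0), ?_⟩
    intro a b c c'
    have hb : opEntry (prodOps T (Kop (cycG 5) ∅)) (mergeBits P a c) (mergeBits P b c')
        = ((sgnL L (mergeBits P a c) : ℤ) : ℂ)
          * (if flipL L (mergeBits P a c) = mergeBits P b c' then 1 else 0) := by
      rw [opEntry, hA]
      rfl
    rw [hb, hsgn a c c0]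
    by_cases hc : c = c'
    · subst hc
      rw [if_pos rfl]
      have hi : (flipL L (mergeBits P a c) = mergeBits P b c)
          ↔ (flipL L (mergeBits P a c0) = mergeBits P b c0) := by
        rw [hiff a b c c]; simp
      rw [if_congr hi rfl rfl]
    · have hn : ¬(flipL L (mergeBits P a c) = mergeBits P b c') := fun h =>
        hc ((hiff a b c c').mp h).2
      rw [if_neg hc, if_neg hn, mul_zero]
  · intro S
    funext x
    rw [hA, Pi.smul_apply, smul_eq_mul, encG_eq, encG_eq]
    have h2 : ((sgnL L x : ℤ) : ℂ) * ((wZ S (flipL L x) : ℤ) : ℂ)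
        = ((-1 : ℂ)) ^ (S : ℕ) * ((wZ S x : ℤ) : ℂ) := by
      exact_mod_cast congrArg (fun n : ℤ => (n : ℂ)) (heig S x)
    calc ((sgnL L x : ℤ) : ℂ) * ((((Real.sqrt 2)⁻¹ ^ 5 : ℝ) : ℂ) * ((wZ S (flipL L x) : ℤ) : ℂ))
        = (((Real.sqrt 2)⁻¹ ^ 5 : ℝ) : ℂ) * (((sgnL L x : ℤ) : ℂ) * ((wZ S (flipL L x) : ℤ) : ℂ)) := by ring
      _ = (((Real.sqrt 2)⁻¹ ^ 5 : ℝ) : ℂ) * ((-1 : ℂ) ^ (S : ℕ) * ((wZ S x : ℤ) : ℂ)) := by rw [h2]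
      _ = (-1 : ℂ) ^ (S : ℕ) * ((((Real.sqrt 2)⁻¹ ^ 5 : ℝ) : ℂ) * ((wZ S x : ℤ) : ℂ)) := by ring

/-- (3,5) threshold scheme on the 5-cycle: with `ℓ^S = (S,…,S)`,
(a) any set of at most two players has reduced states independent of `S`;
(b) for any set of three players there is a nonempty `T` inside it such that
`∏_{i∈T} K_i` acts trivially outside the set and has `|G_{ℓ^S}⟩` as eigenvector with
eigenvalue `(−1)^S`; hence three players can determine `S` while two obtain nothing. -/
theorem c5_35_threshold :
    (∀ P : Finset (Fin 5), P.card ≤ 2 →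
      red P (encG (cycG 5) fun _ => (0 : Fin 2)) =
        red P (encG (cycG 5) fun _ => (1 : Fin 2))) ∧
    (∀ P : Finset (Fin 5), P.card = 3 →
      ∃ T : Finset (Fin 5), T.Nonempty ∧ T ⊆ P ∧
        trivialOutside P (prodOps T (Kop (cycG 5) ∅)) ∧
        ∀ S : Fin 2,
          prodOps T (Kop (cycG 5) ∅) (encG (cycG 5) fun _ => S) =
            ((-1 : ℂ) ^ (S : ℕ)) • encG (cycG 5) fun _ => S) := by
  have key : ∀ (P T : Finset (Fin 5)) (l : List (Fin 5)), T = l.toFinset →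
      l.Pairwise (· ≤ ·) → l.Nodup → T.Nonempty → T ⊆ P →
      (∀ (S : Fin 2) (x : Fin 5 → Fin 2),
        sgnL l x * wZ S (flipL l x) = (-1) ^ (S : ℕ) * wZ S x) →
      (∀ (a : {i // i ∈ P} → Fin 2) (c c' : {i // i ∉ P} → Fin 2),
        sgnL l (mergeBits P a c) = sgnL l (mergeBits P a c')) →
      ∃ T : Finset (Fin 5), T.Nonempty ∧ T ⊆ P ∧
        trivialOutside P (prodOps T (Kop (cycG 5) ∅)) ∧
        ∀ S : Fin 2,
          prodOps T (Kop (cycG 5) ∅) (encG (cycG 5) fun _ => S) =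
            ((-1 : ℂ) ^ (S : ℕ)) • encG (cycG 5) fun _ => S := by
    intro P T l h1 h2 h3 h4 h5 h6 h7
    have hl : T.sort (· ≤ ·) = l := by
      rw [h1]; exact (List.toFinset_sort _ h3).mpr h2
    exact ⟨T, h4, h5, helper_b P T l hl h5 h6 h7⟩
  constructor
  · intro P hP
    funext a b
    rw [red_eq, red_eq]
    congr 1
    exact_mod_cast congrArg (fun n : ℤ => (n : ℂ)) (partA_dec P hP a b)
  · intro P hP
    have hmem : P ∈ Finset.univ.filter (fun Q : Finset (Fin 5) => Q.card = 3) := by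
      simp [hP]
    clear hP
    fin_cases hmem
    · exact key _ {1} [1] (by decide) (by decide) (by decide) (by decide) (by decide)
        (by decide) (by decide)
    · exact key _ {0, 1, 3} [0, 1, 3] (by decide) (by decide) (by decide) (by decide)
        (by decide) (by decide) (by decide)
    · exact key _ {0, 2, 3} [0, 2, 3] (by decide) (by decide) (by decide) (by decide)
        (by decide) (by decide) (by decide)
    · exact key _ {2} [2] (by decide) (by decide) (by decide) (by decide) (by decide)
        (by decide) (by decide)
    · exact key _ {0} [0] (by decide) (by decide) (by decide) (by decide) (by decide)
        (by decide) (by decide)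
    · exact key _ {0, 2, 4} [0, 2, 4] (by decide) (by decide) (by decide) (by decide)
        (by decide) (by decide) (by decide)
    · exact key _ {1, 2, 4} [1, 2, 4] (by decide) (by decide) (by decide) (by decide)
        (by decide) (by decide) (by decide)
    · exact key _ {4} [4] (by decide) (by decide) (by decide) (by decide) (by decide)
        (by decide) (by decide)
    · exact key _ {1, 3, 4} [1, 3, 4] (by decide) (by decide) (by decide) (by decide)
        (by decide) (by decide) (by decide)
    · exact key _ {3} [3] (by decide) (by decide) (by decide) (by decide) (by decide)
        (by decide) (by decide)

end
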